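/- Let L be a G-graded field with graded subfields l and K, and let k be a graded subfield with k ⊆ l ∩ K. If l/k is algebraic (every homogeneous element of l is integral over k), the unit-grading parts agree (L_1 = K_1 as subfields, where 1 is the identity of G), and ρ(L^×)/ρ(K^×) is a torsion group, then the restriction map ψ_{L/l,K/k} : P_{L/l} → P_{K/k}, O ↦ O ∩ K, is bijective. -/

import Mathlib

universe u v

/-- A `G`-graded commutative ring structure on `A`: graded pieces `deg g`,
multiplicativity of the grading, and an internal direct sum decomposition
recorded by the homogeneous-component function `comp`. -/
structure GradedStr (G : Type u) [CommGroup G] (A : Type v) [CommRing A] where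
  deg : G → AddSubgroup A
  one_mem : (1 : A) ∈ deg 1
  mul_mem : ∀ {g h : G} {a b : A}, a ∈ deg g → b ∈ deg h → a * b ∈ deg (g * h)
  comp : A → G → A
  comp_mem : ∀ a g, comp a g ∈ deg g
  comp_add : ∀ a b g, comp (a + b) g = comp a g + comp b g
  comp_of_mem : ∀ {a : A} {g : G}, a ∈ deg g → comp a g = a
  comp_of_mem_ne : ∀ {a : A} {g g' : G}, a ∈ deg g → g' ≠ g → comp a g' = 0
  finite_support : ∀ a : A, (Function.support (comp a)).Finite
  sum_comp : ∀ a : A, ∑ᶠ g, comp a g = a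

namespace GradedStr

variable {G : Type u} [CommGroup G] {A : Type v} [CommRing A]

/-- `a` is homogeneous: it lies in some graded piece. -/
def IsHomog (𝒜 : GradedStr G A) (a : A) : Prop := ∃ g, a ∈ 𝒜.deg g

/-- A `G`-graded field: a nonzero graded ring in which every nonzero homogeneous
element is invertible. -/
def IsGradedField (𝒜 : GradedStr G A) : Prop :=
  Nontrivial A ∧ ∀ a : A, 𝒜.IsHomog a → a ≠ 0 → IsUnit a

/-- A graded subring: a subring stable under taking homogeneous components. -/
def IsGradedSubring (𝒜 : GradedStr G A) (S : Subring A) : Prop :=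
  ∀ x ∈ S, ∀ g, 𝒜.comp x g ∈ S

/-- A graded subfield of a graded field: a graded subring containing the inverses of
its nonzero homogeneous elements. -/
def IsGradedSubfield (𝒜 : GradedStr G A) (S : Subring A) : Prop :=
  𝒜.IsGradedSubring S ∧ ∀ x ∈ S, 𝒜.IsHomog x → x ≠ 0 → Ring.inverse x ∈ S

/-- The additive subgroup of homogeneous polynomials of grading `h` in `K[g₀⁻¹ T]`,
the polynomial ring in which `T` is declared homogeneous of grading `g₀`: the
coefficient of `T^n` must be homogeneous of grading `h * g₀⁻ⁿ`. -/
def polyDeg (𝒜 : GradedStr G A) (g₀ h : G) : AddSubgroup (Polynomial A) where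
  carrier := {p | ∀ n : ℕ, p.coeff n ∈ 𝒜.deg (h * (g₀ ^ n)⁻¹)}
  zero_mem' := by intro n; simpa using (𝒜.deg (h * (g₀ ^ n)⁻¹)).zero_mem
  add_mem' := by
    intro p q hp hq n
    rw [Polynomial.coeff_add]
    exact (𝒜.deg _).add_mem (hp n) (hq n)
  neg_mem' := by
    intro p hp n
    rw [Polynomial.coeff_neg]
    exact (𝒜.deg _).neg_mem (hp n)

/-- A homogeneous polynomial in `K[g₀⁻¹T]`. -/
def IsHomogPoly (𝒜 : GradedStr G A) (g₀ : G) (p : Polynomial A) : Prop :=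
  ∃ h, p ∈ 𝒜.polyDeg g₀ h

/-- The graded fraction field of a graded subring of a graded field, computed inside
the ambient graded field: the subring generated by `S` together with the inverses of
the nonzero homogeneous elements of `S`. -/
def fracIn (𝒜 : GradedStr G A) (S : Subring A) : Subring A :=
  Subring.closure (↑S ∪ {y : A | ∃ x ∈ S, x ≠ 0 ∧ 𝒜.IsHomog x ∧ y = Ring.inverse x})

end GradedStr

/-- `x` is integral over the subring `S` (satisfies a monic polynomial equation with
coefficients in `S`). -/
def IntegralOver {A : Type v} [CommRing A] (S : Subring A) (x : A) : Prop :=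
  ∃ p : Polynomial A, p.Monic ∧ (∀ n, p.coeff n ∈ S) ∧ Polynomial.eval x p = 0

/-- Algebraic independence of a family of elements over a subring: the evaluation map
from the (multivariate) polynomial ring is injective.  (For homogeneous elements this
is graded algebraic independence, the grading playing no role in injectivity.) -/
def AlgIndepOver {A : Type v} [CommRing A] {ι : Type*} (S : Subring A) (T : ι → A) : Prop :=
  Function.Injective (MvPolynomial.eval₂Hom S.subtype T)

/-- A graded valuation ring of the graded subfield `F` of the ambient graded field:
a graded subring `O ⊆ F` such that every nonzero homogeneous element `f` of `F`
satisfies `f ∈ O` or `f⁻¹ ∈ O`. -/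
def IsGVRofSubfield {G : Type u} [CommGroup G] {A : Type v} [CommRing A]
    (𝒜 : GradedStr G A) (F : Subring A) (O : Subring A) : Prop :=
  O ≤ F ∧ 𝒜.IsGradedSubring O ∧
    ∀ f ∈ F, f ≠ 0 → 𝒜.IsHomog f → f ∈ O ∨ Ring.inverse f ∈ O


section Aux

variable {G : Type u} [CommGroup G] {L : Type v} [CommRing L] (𝒜 : GradedStr G L)

theorem aux_comp_zero (g : G) : 𝒜.comp 0 g = 0 :=
  𝒜.comp_of_mem ((𝒜.deg g).zero_mem)

theorem aux_comp_neg (a : L) (g : G) : 𝒜.comp (-a) g = -𝒜.comp a g := by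
  have h := 𝒜.comp_add a (-a) g
  rw [add_neg_cancel, aux_comp_zero] at h
  exact (neg_eq_of_add_eq_zero_right h.symm).symm

/-- The homogeneous component map as an additive homomorphism. -/
def auxCompHom (g : G) : L →+ L where
  toFun a := 𝒜.comp a g
  map_zero' := aux_comp_zero 𝒜 g
  map_add' a b := 𝒜.comp_add a b g

theorem aux_comp_sum {ι : Type*} (s : Finset ι) (f : ι → L) (g : G) :
    𝒜.comp (∑ i ∈ s, f i) g = ∑ i ∈ s, 𝒜.comp (f i) g :=
  map_sum (auxCompHom 𝒜 g) f s

theorem aux_eq_sum_comp (a : L) :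
    a = ∑ h ∈ (𝒜.finite_support a).toFinset, 𝒜.comp a h := by
  conv_lhs => rw [← 𝒜.sum_comp a]
  exact finsum_eq_sum _ (𝒜.finite_support a)

theorem aux_mem_of_comps {S : Subring L} {a : L} (h : ∀ g, 𝒜.comp a g ∈ S) : a ∈ S := by
  have hs : (∑ h ∈ (𝒜.finite_support a).toFinset, 𝒜.comp a h) ∈ S :=
    sum_mem fun g _ => h g
  rwa [← aux_eq_sum_comp] at hs

theorem aux_mul_comp {f : L} {h : G} (hf : f ∈ 𝒜.deg h) (b : L) (g : G) :
    𝒜.comp (f * b) (h * g) = f * 𝒜.comp b g := by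
  classical
  set t := (𝒜.finite_support b).toFinset with ht
  have h1 : 𝒜.comp (f * b) (h * g) = ∑ h' ∈ t, 𝒜.comp (f * 𝒜.comp b h') (h * g) := by
    conv_lhs => rw [aux_eq_sum_comp 𝒜 b, Finset.mul_sum]
    exact aux_comp_sum 𝒜 t _ (h * g)
  have h2 : ∀ h' ∈ t, 𝒜.comp (f * 𝒜.comp b h') (h * g)
      = if h' = g then f * 𝒜.comp b g else 0 := by
    intro h' _
    have hmem : f * 𝒜.comp b h' ∈ 𝒜.deg (h * h') := 𝒜.mul_mem hf (𝒜.comp_mem b h')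
    by_cases e : h' = g
    · subst e
      rw [if_pos rfl]
      exact 𝒜.comp_of_mem hmem
    · rw [if_neg e]
      refine 𝒜.comp_of_mem_ne hmem fun hc => e ?_
      exact (mul_left_cancel hc).symm
  rw [h1, Finset.sum_congr rfl h2, Finset.sum_ite_eq' t g (fun _ => f * 𝒜.comp b g)]
  by_cases hg : g ∈ t
  · rw [if_pos hg]
  · rw [if_neg hg]
    have : 𝒜.comp b g = 0 := by
      by_contra hc
      exact hg ((𝒜.finite_support b).mem_toFinset.mpr hc)
    rw [this, mul_zero]

theorem aux_comp_mul (a b : L) (g : G) :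
    𝒜.comp (a * b) g
      = ∑ h ∈ (𝒜.finite_support a).toFinset, 𝒜.comp a h * 𝒜.comp b (h⁻¹ * g) := by
  conv_lhs => rw [aux_eq_sum_comp 𝒜 a, Finset.sum_mul]
  rw [aux_comp_sum]
  refine Finset.sum_congr rfl fun h _ => ?_
  have hg : g = h * (h⁻¹ * g) := by group
  conv_lhs => rw [hg]
  exact aux_mul_comp 𝒜 (𝒜.comp_mem a h) b (h⁻¹ * g)

theorem aux_pow_mem {f : L} {g : G} (hf : f ∈ 𝒜.deg g) (n : ℕ) : f ^ n ∈ 𝒜.deg (g ^ n) := by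
  induction n with
  | zero => simpa using 𝒜.one_mem
  | succ n ih => rw [pow_succ, pow_succ]; exact 𝒜.mul_mem ih hf

theorem aux_inv_mem (hL : 𝒜.IsGradedField) {f : L} {g : G} (hf : f ∈ 𝒜.deg g)
    (h0 : f ≠ 0) : Ring.inverse f ∈ 𝒜.deg g⁻¹ := by
  have hu : IsUnit f := hL.2 f ⟨g, hf⟩ h0
  set u := Ring.inverse f with hu'
  have hfu : f * u = 1 := Ring.mul_inverse_cancel f hu
  have key : ∀ h : G, h ≠ g⁻¹ → 𝒜.comp u h = 0 := by
    intro h hh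
    have h1 : 𝒜.comp (f * u) (g * h) = f * 𝒜.comp u h := aux_mul_comp 𝒜 hf u h
    have h2 : 𝒜.comp (f * u) (g * h) = 0 := by
      rw [hfu]
      refine 𝒜.comp_of_mem_ne 𝒜.one_mem fun e => hh ?_
      exact (inv_eq_of_mul_eq_one_right e).symm
    exact hu.mul_right_eq_zero.mp (h1.symm.trans h2)
  have hue : u = 𝒜.comp u g⁻¹ := by
    conv_lhs => rw [← 𝒜.sum_comp u]
    exact finsum_eq_single _ _ key
  rw [hue]
  exact 𝒜.comp_mem u g⁻¹

theorem aux_root_mem {S : Subring L} {z : L} (hzu : IsUnit z) {m : ℕ} (hm : 0 < m)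
    (h1 : z ^ m ∈ S) (h2 : Ring.inverse z ∈ S) : z ∈ S := by
  have hz : z = z ^ m * (Ring.inverse z) ^ (m - 1) := by
    have hp : z ^ m = z * z ^ (m - 1) := by
      rw [← pow_succ']
      congr 1
      omega
    rw [hp, mul_assoc, ← mul_pow, Ring.mul_inverse_cancel z hzu, one_pow, mul_one]
  rw [hz]
  exact S.mul_mem h1 (S.pow_mem h2 _)

theorem aux_integralOver_pow {k : Subring L} {x : L} (hx : IntegralOver k x) (m : ℕ) :
    IntegralOver k (x ^ m) := by
  obtain ⟨p, hpm, hpc, hpe⟩ := hx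
  have hsub : (↑p.coeffs : Set L) ⊆ k := by
    intro c hc
    obtain ⟨n, -, rfl⟩ := Polynomial.mem_coeffs_iff.mp (Finset.mem_coe.mp hc)
    exact hpc n
  have hint : IsIntegral (↥k) x := by
    refine ⟨p.toSubring k hsub, (Polynomial.monic_toSubring _ _ _).mpr hpm, ?_⟩
    have hmap : (p.toSubring k hsub).map (Subring.subtype k) = p :=
      Polynomial.map_toSubring _ _ _
    rw [Polynomial.eval₂_eq_eval_map]
    rw [show (algebraMap (↥k) L) = k.subtype from rfl, hmap]
    exact hpe
  obtain ⟨q, hqm, hqe⟩ := hint.pow m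
  refine ⟨q.map k.subtype, hqm.map _, fun n => ?_, ?_⟩
  · rw [Polynomial.coeff_map]
    exact (q.coeff n).2
  · rw [Polynomial.eval_map]
    exact hqe

end Aux

/-- Let `L` be a `G`-graded field with graded subfields `l` and `K`,
and `k` a graded subfield with `k ⊆ l ∩ K`.  If `l/k` is algebraic (every homogeneous
element of `l` is integral over `k`), the grading-one parts agree (`L₁ = K₁`), and
`ρ(L^×)/ρ(K^×)` is a torsion group, then the restriction map
`ψ : P_{L/l} → P_{K/k}`, `O ↦ O ∩ K`, is bijective. -/
theorem psi_bijective
    {G : Type u} [CommGroup G] {L : Type v} [CommRing L]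
    (𝒜 : GradedStr G L) (hL : 𝒜.IsGradedField)
    (l K k : Subring L)
    (hl : 𝒜.IsGradedSubfield l) (hK : 𝒜.IsGradedSubfield K)
    (hk : 𝒜.IsGradedSubfield k) (hkl : k ≤ l) (hkK : k ≤ K)
    (halg : ∀ x ∈ l, 𝒜.IsHomog x → IntegralOver k x)
    (hone : ∀ x : L, x ∈ 𝒜.deg 1 → x ∈ K)
    (htor : ∀ g : G, (∃ x : L, x ≠ 0 ∧ x ∈ 𝒜.deg g) →
      ∃ m : ℕ, 0 < m ∧ ∃ y ∈ K, y ≠ 0 ∧ y ∈ 𝒜.deg (g ^ m)) :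
    (∀ O : Subring L, IsGVRofSubfield 𝒜 ⊤ O → l ≤ O →
      (IsGVRofSubfield 𝒜 K (O ⊓ K) ∧ k ≤ O ⊓ K)) ∧
    (∀ O' : Subring L, IsGVRofSubfield 𝒜 K O' → k ≤ O' →
      ∃! O : Subring L, (IsGVRofSubfield 𝒜 ⊤ O ∧ l ≤ O) ∧ O ⊓ K = O') := by
  classical
  haveI : Nontrivial L := hL.1
  constructor
  · -- well-definedness of ψ
    intro O hO hlO
    obtain ⟨-, hOgr, hOval⟩ := hO
    refine ⟨⟨inf_le_right, ?_, ?_⟩, le_inf (hkl.trans hlO) hkK⟩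
    · intro x hx g
      rw [Subring.mem_inf] at hx ⊢
      exact ⟨hOgr x hx.1 g, hK.1 x hx.2 g⟩
    · intro f hf hf0 hfh
      rcases hOval f trivial hf0 hfh with h | h
      · exact Or.inl (Subring.mem_inf.mpr ⟨h, hf⟩)
      · exact Or.inr (Subring.mem_inf.mpr ⟨h, hK.2 f hf hfh hf0⟩)
  · -- bijectivity: existence and uniqueness of the preimage
    intro O' hO' hkO'
    obtain ⟨hO'K, hO'gr, hO'val⟩ := hO'
    -- every nonzero homogeneous element of L has a positive power in K
    have hpowK : ∀ (f : L) (g : G), f ∈ 𝒜.deg g → f ≠ 0 → ∃ m : ℕ, 0 < m ∧ f ^ m ∈ K := by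
      intro f g hf h0
      obtain ⟨m, hm, y, hyK, hy0, hyd⟩ := htor g ⟨f, h0, hf⟩
      have hfm : f ^ m ∈ 𝒜.deg (g ^ m) := aux_pow_mem 𝒜 hf m
      have hyu : IsUnit y := hL.2 y ⟨_, hyd⟩ hy0
      have hyi : Ring.inverse y ∈ 𝒜.deg (g ^ m)⁻¹ := aux_inv_mem 𝒜 hL hyd hy0
      have hz : f ^ m * Ring.inverse y ∈ 𝒜.deg 1 := by
        have hh := 𝒜.mul_mem hfm hyi
        rwa [mul_inv_cancel] at hh
      have hmem : f ^ m * Ring.inverse y * y ∈ K := K.mul_mem (hone _ hz) hyK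
      rw [mul_assoc, Ring.inverse_mul_cancel y hyu, mul_one] at hmem
      exact ⟨m, hm, hmem⟩
    -- the power predicate
    set Q : L → Prop := fun x => ∃ m : ℕ, 0 < m ∧ x ^ m ∈ O' with hQdef
    have hQ0 : Q 0 := ⟨1, one_pos, by simpa using O'.zero_mem⟩
    have hQ1 : Q 1 := ⟨1, one_pos, by simpa using O'.one_mem⟩
    have hQmul : ∀ x y : L, Q x → Q y → Q (x * y) := by
      rintro x y ⟨m, hm, hx⟩ ⟨n, hn, hy⟩
      refine ⟨m * n, Nat.mul_pos hm hn, ?_⟩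
      rw [mul_pow]
      refine O'.mul_mem ?_ ?_
      · rw [pow_mul]; exact O'.pow_mem hx n
      · rw [mul_comm m n, pow_mul]; exact O'.pow_mem hy m
    have hQneg : ∀ x : L, Q x → Q (-x) := by
      rintro x ⟨m, hm, hx⟩
      refine ⟨2 * m, by omega, ?_⟩
      rw [pow_mul, neg_sq, ← pow_mul, mul_comm 2 m, pow_mul]
      exact O'.pow_mem hx 2
    have hQadd : ∀ (g : G) (x y : L), x ∈ 𝒜.deg g → y ∈ 𝒜.deg g → Q x → Q y →
        Q (x + y) := by
      intro g x y hx hy qx qy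
      by_cases hx0 : x = 0
      · subst hx0; simpa using qy
      by_cases hy0 : y = 0
      · subst hy0; simpa using qx
      have hxu := hL.2 x ⟨g, hx⟩ hx0
      have hyu := hL.2 y ⟨g, hy⟩ hy0
      have hyi : Ring.inverse y ∈ 𝒜.deg g⁻¹ := aux_inv_mem 𝒜 hL hy hy0
      set t := x * Ring.inverse y with hty
      have htd : t ∈ 𝒜.deg 1 := by
        have hh := 𝒜.mul_mem hx hyi
        rwa [mul_inv_cancel] at hh
      have hyt : y * t = x := by
        calc y * (x * Ring.inverse y) = x * (y * Ring.inverse y) := by ring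
          _ = x := by rw [Ring.mul_inverse_cancel y hyu, mul_one]
      have ht0 : t ≠ 0 := by
        intro e
        rw [e, mul_zero] at hyt
        exact hx0 hyt.symm
      have htu : IsUnit t := hL.2 t ⟨1, htd⟩ ht0
      rcases hO'val t (hone t htd) ht0 ⟨1, htd⟩ with hO | hO
      · obtain ⟨n, hn, hyn⟩ := qy
        have hxy : x + y = y * (1 + t) := by rw [mul_add, mul_one, hyt, add_comm]
        refine ⟨n, hn, ?_⟩
        rw [hxy, mul_pow]
        exact O'.mul_mem hyn (O'.pow_mem (O'.add_mem O'.one_mem hO) n)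
      · set s := Ring.inverse t with hs
        have hxs : x * s = y := by
          rw [← hyt, mul_assoc, Ring.mul_inverse_cancel t htu, mul_one]
        obtain ⟨n, hn, hxn⟩ := qx
        have hxy : x + y = x * (1 + s) := by rw [mul_add, mul_one, hxs]
        refine ⟨n, hn, ?_⟩
        rw [hxy, mul_pow]
        exact O'.mul_mem hxn (O'.pow_mem (O'.add_mem O'.one_mem hO) n)
    have hQsum : ∀ (g : G) (s : Finset G) (f : G → L),
        (∀ i ∈ s, f i ∈ 𝒜.deg g) → (∀ i ∈ s, Q (f i)) → Q (∑ i ∈ s, f i) := by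
      intro g s
      induction s using Finset.induction_on with
      | empty => intro f _ _; simpa using hQ0
      | insert a s' hnotmem ih =>
        intro f hdeg hQf
        rw [Finset.sum_insert hnotmem]
        refine hQadd g _ _ (hdeg a (Finset.mem_insert_self a s')) ?_
          (hQf a (Finset.mem_insert_self a s')) ?_
        · exact sum_mem fun i hi => hdeg i (Finset.mem_insert_of_mem hi)
        · exact ih f (fun i hi => hdeg i (Finset.mem_insert_of_mem hi))
            (fun i hi => hQf i (Finset.mem_insert_of_mem hi))
    -- the candidate valuation ring of L
    set O : Subring L :=
      { carrier := {a : L | ∀ g : G, Q (𝒜.comp a g)}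
        one_mem' := by
          intro g
          by_cases h : g = 1
          · subst h; rw [𝒜.comp_of_mem 𝒜.one_mem]; exact hQ1
          · rw [𝒜.comp_of_mem_ne 𝒜.one_mem h]; exact hQ0
        zero_mem' := fun g => by rw [aux_comp_zero]; exact hQ0
        add_mem' := by
          intro a b ha hb g
          rw [𝒜.comp_add]
          exact hQadd g _ _ (𝒜.comp_mem a g) (𝒜.comp_mem b g) (ha g) (hb g)
        neg_mem' := by
          intro a ha g
          rw [aux_comp_neg]
          exact hQneg _ (ha g)
        mul_mem' := by
          intro a b ha hb g
          rw [aux_comp_mul]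
          refine hQsum g _ _ (fun h _ => ?_) (fun h _ => hQmul _ _ (ha h) (hb _))
          have hh := 𝒜.mul_mem (𝒜.comp_mem a h) (𝒜.comp_mem b (h⁻¹ * g))
          rwa [mul_inv_cancel_left] at hh } with hOdef
    have hmemO : ∀ x : L, x ∈ O ↔ ∀ g : G, Q (𝒜.comp x g) := fun x => Iff.rfl
    have hhom_mem : ∀ {f : L} {g : G}, f ∈ 𝒜.deg g → Q f → f ∈ O := by
      intro f g hf qf
      rw [hmemO]
      intro g'
      by_cases h : g' = g
      · subst h; rwa [𝒜.comp_of_mem hf]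
      · rw [𝒜.comp_of_mem_ne hf h]; exact hQ0
    have hmem_hom : ∀ {f : L} {g : G}, f ∈ 𝒜.deg g → f ∈ O → Q f := by
      intro f g hf hfO
      have hh := (hmemO f).mp hfO g
      rwa [𝒜.comp_of_mem hf] at hh
    -- homogeneous elements of K with a power in O′ lie in O′
    have hQK : ∀ {f : L} {g : G}, f ∈ 𝒜.deg g → f ∈ K → Q f → f ∈ O' := by
      rintro f g hf hfK ⟨m, hm, hfm⟩
      by_cases h0 : f = 0
      · subst h0; exact O'.zero_mem
      rcases hO'val f hfK h0 ⟨g, hf⟩ with h | h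
      · exact h
      · exact aux_root_mem (hL.2 f ⟨g, hf⟩ h0) hm hfm h
    -- O is graded
    have hOgr : 𝒜.IsGradedSubring O := by
      intro x hx g
      rw [hmemO]
      intro g'
      by_cases h : g' = g
      · subst h
        rw [𝒜.comp_of_mem (𝒜.comp_mem x g')]
        exact (hmemO x).mp hx g'
      · rw [𝒜.comp_of_mem_ne (𝒜.comp_mem x g) h]
        exact hQ0
    -- O is a valuation ring of L
    have hOval : ∀ f : L, f ≠ 0 → 𝒜.IsHomog f → f ∈ O ∨ Ring.inverse f ∈ O := by
      rintro f h0 ⟨g, hf⟩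
      obtain ⟨m, hm, hfmK⟩ := hpowK f g hf h0
      have hfu := hL.2 f ⟨g, hf⟩ h0
      have hfm0 : f ^ m ≠ 0 := (hfu.pow m).ne_zero
      rcases hO'val (f ^ m) hfmK hfm0 ⟨g ^ m, aux_pow_mem 𝒜 hf m⟩ with h | h
      · exact Or.inl (hhom_mem hf ⟨m, hm, h⟩)
      · refine Or.inr (hhom_mem (aux_inv_mem 𝒜 hL hf h0) ⟨m, hm, ?_⟩)
        rwa [Ring.inverse_pow]
    -- l is contained in O
    have hlO : l ≤ O := by
      intro x hx
      rw [hmemO]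
      intro g
      have hxg : 𝒜.comp x g ∈ l := hl.1 x hx g
      set z := 𝒜.comp x g with hz
      have hzd : z ∈ 𝒜.deg g := 𝒜.comp_mem x g
      by_cases h0 : z = 0
      · rw [h0]; exact hQ0
      obtain ⟨m, hm, hzmK⟩ := hpowK z g hzd h0
      refine ⟨m, hm, ?_⟩
      have hint : IntegralOver k (z ^ m) := aux_integralOver_pow (halg z hxg ⟨g, hzd⟩) m
      set y := z ^ m with hy
      have hzu := hL.2 z ⟨g, hzd⟩ h0
      have hyu : IsUnit y := hzu.pow m
      have hy0 : y ≠ 0 := hyu.ne_zero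
      rcases hO'val y hzmK hy0 ⟨g ^ m, aux_pow_mem 𝒜 hzd m⟩ with h | h
      · exact h
      · obtain ⟨p, hpm, hpc, hpe⟩ := hint
        set n := p.natDegree with hn
        have hn1 : 1 ≤ n := by
          by_contra hcon
          have hn0 : n = 0 := by omega
          have hp1 : p = 1 := (Polynomial.Monic.natDegree_eq_zero hpm).mp hn0
          rw [hp1, Polynomial.eval_one] at hpe
          exact one_ne_zero hpe
        set w := Ring.inverse y with hw
        have hyw : y * w = 1 := Ring.mul_inverse_cancel y hyu
        have he : ∑ i ∈ Finset.range (n + 1), p.coeff i * y ^ i = 0 := by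
          rw [← Polynomial.eval_eq_sum_range]
          exact hpe
        rw [Finset.sum_range_succ, Polynomial.Monic.coeff_natDegree hpm, one_mul] at he
        have hyn : y ^ n = -∑ i ∈ Finset.range n, p.coeff i * y ^ i :=
          eq_neg_of_add_eq_zero_left (by rw [add_comm]; exact he)
        have hy_eq : y = y ^ n * w ^ (n - 1) := by
          have h2 : y ^ n = y * y ^ (n - 1) := by
            rw [← pow_succ']
            congr 1
            omega
          rw [h2, mul_assoc, ← mul_pow, hyw, one_pow, mul_one]
        have hfinal : y = -∑ i ∈ Finset.range n, p.coeff i * y ^ i * w ^ (n - 1) := by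
          conv_lhs => rw [hy_eq, hyn]
          rw [neg_mul, Finset.sum_mul]
        rw [hfinal]
        refine O'.neg_mem (sum_mem fun i hi => ?_)
        have hin : i < n := Finset.mem_range.mp hi
        have hsplitw : w ^ (n - 1) = w ^ i * w ^ (n - 1 - i) := by
          rw [← pow_add]
          congr 1
          omega
        have hterm : p.coeff i * y ^ i * w ^ (n - 1) = p.coeff i * w ^ (n - 1 - i) := by
          calc p.coeff i * y ^ i * w ^ (n - 1)
              = p.coeff i * ((y * w) ^ i * w ^ (n - 1 - i)) := by
                rw [hsplitw, mul_pow]; ring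
            _ = p.coeff i * w ^ (n - 1 - i) := by rw [hyw, one_pow, one_mul]
        rw [hterm]
        exact O'.mul_mem (hkO' (hpc i)) (O'.pow_mem h _)
    -- O restricts to O'
    have hOK : O ⊓ K = O' := by
      apply le_antisymm
      · intro a ha
        rw [Subring.mem_inf] at ha
        refine aux_mem_of_comps 𝒜 fun g => ?_
        exact hQK (𝒜.comp_mem a g) (hK.1 a ha.2 g) ((hmemO a).mp ha.1 g)
      · intro a ha
        rw [Subring.mem_inf]
        refine ⟨(hmemO a).mpr fun g => ⟨1, one_pos, ?_⟩, hO'K ha⟩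
        simpa using hO'gr a ha g
    refine ⟨O, ⟨⟨⟨le_top, hOgr, fun f _ h0 hh => hOval f h0 hh⟩, hlO⟩, hOK⟩, ?_⟩
    -- uniqueness
    rintro O₁ ⟨⟨⟨-, hO₁gr, hO₁val⟩, hlO₁⟩, hO₁K⟩
    have hhom₁ : ∀ (f : L) (g : G), f ∈ 𝒜.deg g → (f ∈ O₁ ↔ Q f) := by
      intro f g hf
      by_cases h0 : f = 0
      · subst h0; exact iff_of_true O₁.zero_mem hQ0
      constructor
      · intro hfO₁
        obtain ⟨m, hm, hfmK⟩ := hpowK f g hf h0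
        refine ⟨m, hm, ?_⟩
        rw [← hO₁K, Subring.mem_inf]
        exact ⟨O₁.pow_mem hfO₁ m, hfmK⟩
      · rintro ⟨m, hm, hfm⟩
        have hfmO₁ : f ^ m ∈ O₁ := by
          rw [← hO₁K, Subring.mem_inf] at hfm
          exact hfm.1
        rcases hO₁val f trivial h0 ⟨g, hf⟩ with h | h
        · exact h
        · exact aux_root_mem (hL.2 f ⟨g, hf⟩ h0) hm hfmO₁ h
    ext a
    constructor
    · intro ha
      rw [hmemO]
      intro g
      exact ((hhom₁ _ g (𝒜.comp_mem a g)).mp (hO₁gr a ha g))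
    · intro ha
      refine aux_mem_of_comps 𝒜 fun g => ?_
      exact (hhom₁ _ g (𝒜.comp_mem a g)).mpr ((hmemO a).mp ha g)
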